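/- Let a_{ji} ∈ C (2 ≤ j ≤ m, 1 ≤ i ≤ n, m ≤ n), and for ℓ = 1,…,t let D^{(ℓ)} be the m×n complex matrix whose first row is (c_1^{(ℓ)},…,c_n^{(ℓ)}) and whose remaining rows are the fixed rows (a_{j1},…,a_{jn}). Let B be the t × C(n,m) matrix whose (ℓ,α) entry is the m×m minor of D^{(ℓ)} on the column set α. Then rank(B) ≤ n − m + 1. -/

import Mathlib

open Classical in
private lemma det_updateRow_lin {m : ℕ} (A : Matrix (Fin m) (Fin m) ℂ) (z : Fin m)
    {ι : Type*} (t : Finset ι) (v : ι → ℂ) (w : ι → Fin m → ℂ) :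
    (A.updateRow z (∑ k ∈ t, v k • w k)).det = ∑ k ∈ t, v k * (A.updateRow z (w k)).det := by
  induction t using Finset.induction with
  | empty =>
      have := Matrix.det_updateRow_smul A z (0 : ℂ) 0
      simpa using this
  | @insert x s h ih =>
      simp only [Finset.sum_insert h, Matrix.det_updateRow_add, Matrix.det_updateRow_smul, ih,
        smul_eq_mul]

open Classical in
/-- let D⁽ℓ⁾ (ℓ = 1,…,t) be m×n matrices with varying first row
c⁽ℓ⁾ and common remaining rows a_j; let B be the matrix whose (ℓ,α) entry is the
maximal minor of D⁽ℓ⁾ on the (strictly increasing) column set α. Then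
rank B ≤ n - m + 1. -/
theorem rank_of_minor_matrix_le (m n t : ℕ) (hm : 0 < m) (hmn : m ≤ n)
    (a : Fin m → Fin n → ℂ) (c : Fin t → Fin n → ℂ) :
    (Matrix.of fun (l : Fin t) (s : Fin m → Fin n) =>
      if StrictMono s then
        Matrix.det (Matrix.of fun (i j : Fin m) =>
          if i = (⟨0, hm⟩ : Fin m) then c l (s j) else a i (s j))
      else 0).rank ≤ n - m + 1 := by
  set z : Fin m := ⟨0, hm⟩ with hz
  -- D v s : the minor matrix with first row v ∘ s
  set D : (Fin n → ℂ) → (Fin m → Fin n) → Matrix (Fin m) (Fin m) ℂ :=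
    fun v s => Matrix.of fun (i j : Fin m) =>
      if i = z then v (s j) else a i (s j) with hD
  -- multilinearity in the first row
  have key : ∀ (v : Fin n → ℂ) (s : Fin m → Fin n),
      (D v s).det = ∑ k : Fin n, v k * (D (Pi.single k 1) s).det := by
    intro v s
    have h1 : ∀ w : Fin n → ℂ, D w s = (D 0 s).updateRow z (fun j => w (s j)) := by
      intro w
      ext i j
      by_cases hi : i = z <;> simp [hD, Matrix.updateRow_apply, hi]
    have h2 : (fun j => v (s j)) = ∑ k : Fin n, v k • (fun j => Pi.single k (1:ℂ) (s j)) := by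
      funext j
      simp [Pi.single_apply, Finset.sum_apply, mul_ite, Finset.sum_ite_eq']
    rw [h1 v, h2, det_updateRow_lin]
    congr 1
    funext k
    rw [← h1]
  -- the coefficient matrix M (independent of c)
  set M : Matrix (Fin n) ((Fin m) → Fin n) ℂ :=
    Matrix.of fun k s =>
      if StrictMono s then (D (Pi.single k 1) s).det else 0 with hM
  -- B factors as C * M
  have hfact : (Matrix.of fun (l : Fin t) (s : Fin m → Fin n) =>
      if StrictMono s then
        Matrix.det (Matrix.of fun (i j : Fin m) =>
          if i = (⟨0, hm⟩ : Fin m) then c l (s j) else a i (s j))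
      else 0) = (Matrix.of fun (l : Fin t) (k : Fin n) => c l k) * M := by
    ext l s
    rw [Matrix.mul_apply]
    by_cases hs : StrictMono s
    · simp only [Matrix.of_apply, hM, hs, if_true]
      have := key (c l) s
      simp only [hD] at this
      simpa [hz] using this
    · simp [hM, hs]
  rw [hfact]
  refine le_trans (Matrix.rank_mul_le_right _ M) ?_
  by_cases hind : LinearIndependent ℂ (fun i : {i : Fin m // i ≠ z} => a i.1)
  · -- independent case: the rows a_i, i ≠ z, lie in the kernel of M.transpose
    rw [← Matrix.rank_transpose M]
    have hker : ∀ i : Fin m, i ≠ z → M.transpose.mulVecLin (a i) = 0 := by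
      intro i hi
      ext s
      simp only [Matrix.mulVecLin_apply, Matrix.mulVec, dotProduct,
        Matrix.transpose_apply, Pi.zero_apply, hM, Matrix.of_apply]
      by_cases hs : StrictMono s
      · simp only [hs, if_true]
        have : ∑ k : Fin n, (if StrictMono s then (D (Pi.single k 1) s).det else 0) * a i k
            = (D (a i) s).det := by
          rw [key (a i) s]
          simp only [hs, if_true]
          exact Finset.sum_congr rfl fun k _ => by ring
        simp only [hs, if_true] at this
        rw [this]
        refine Matrix.det_zero_of_row_eq hi ?_
        funext j
        simp [hD, hi]
      · simp [hs]
    have hspan : Submodule.span ℂ (Set.range fun i : {i : Fin m // i ≠ z} => a i.1)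
        ≤ LinearMap.ker M.transpose.mulVecLin := by
      rw [Submodule.span_le]
      rintro x ⟨i, rfl⟩
      exact hker i.1 i.2
    have hcard : Fintype.card {i : Fin m // i ≠ z} = m - 1 := by
      have : Fintype.card {i : Fin m // i ≠ z} = Fintype.card (Fin m) - 1 := by
        rw [← Fintype.card_subtype_eq z]
        exact Fintype.card_subtype_compl _
      simpa using this
    have hfr : Module.finrank ℂ
        (Submodule.span ℂ (Set.range fun i : {i : Fin m // i ≠ z} => a i.1)) = m - 1 := by
      rw [finrank_span_eq_card hind, hcard]
    have hle : m - 1 ≤ Module.finrank ℂ (LinearMap.ker M.transpose.mulVecLin) := by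
      rw [← hfr]
      exact Submodule.finrank_mono hspan
    have hrn : M.transpose.rank + Module.finrank ℂ (LinearMap.ker M.transpose.mulVecLin)
        = Module.finrank ℂ (Fin n → ℂ) :=
      LinearMap.finrank_range_add_finrank_ker M.transpose.mulVecLin
    rw [Module.finrank_pi] at hrn
    simp only [Fintype.card_fin] at hrn
    omega
  · -- dependent case: M = 0
    have hM0 : M = 0 := by
      obtain ⟨g, hgsum, i₀, hgi₀⟩ := Fintype.not_linearIndependent_iff.mp hind
      ext k s
      simp only [hM, Matrix.of_apply, Matrix.zero_apply]
      by_cases hs : StrictMono s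
      · simp only [hs, if_true]
        rw [← Matrix.exists_vecMul_eq_zero_iff]
        refine ⟨fun i => if h : i = z then 0 else g ⟨i, h⟩, ?_, ?_⟩
        · intro h0
          apply hgi₀
          have := congrFun h0 i₀.1
          simpa [i₀.2] using this
        · funext j
          simp only [Matrix.vecMul, dotProduct, Pi.zero_apply]
          have hsum : ∀ i : Fin m, (if h : i = z then 0 else g ⟨i, h⟩) * (D (Pi.single k 1) s) i j
              = (if h : i = z then 0 else g ⟨i, h⟩ * a i (s j)) := by
            intro i
            by_cases h : i = z <;> simp [hD, h]
          have happ : ∑ i : {i : Fin m // i ≠ z}, g i * a i.1 (s j) = 0 := by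
            have := congrFun hgsum (s j)
            simpa [Finset.sum_apply] using this
          rw [Finset.sum_congr rfl fun i _ => hsum i]
          conv_rhs => rw [← happ]
          rw [show (∑ i : {i : Fin m // i ≠ z}, g i * a i.1 (s j))
              = ∑ i : {i : Fin m // i ≠ z},
                  (fun i : Fin m => if h : i = z then 0 else g ⟨i, h⟩ * a i (s j)) i.1
              from Finset.sum_congr rfl fun i _ => by simp [i.2]]
          rw [← Finset.sum_subtype (Finset.univ.erase z) (fun i => by simp)
            (fun i : Fin m => if h : i = z then 0 else g ⟨i, h⟩ * a i (s j))]
          rw [Finset.sum_erase _ (by simp)]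
      · simp [hs]
    rw [hM0, Matrix.rank_zero]
    omega
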